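/- Let p be an odd prime, k a positive integer, and g ∈ ℤ[X] a polynomial with g(ω_p) ≠ 0 whose coefficient absolute values sum to at most p^k (i.e., the ℓ₁ norm of the coefficient vector |g|₁ ≤ p^k). Then |g(ω_p)/p^k| ≥ 1/p^{k(p−1)/2}. -/

import Mathlib

open Polynomial IntermediateField

set_option maxHeartbeats 1000000 in
theorem granular_lower_bound_odd_prime
    (p : ℕ) (hp : p.Prime) (hodd : Odd p) (k : ℕ) (hk : 0 < k)
    (g : Polynomial ℤ)
    (hg : Polynomial.aeval (Complex.exp (2 * Real.pi * Complex.I / p)) g ≠ 0)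
    (h1 : (∑ i ∈ g.support, |g.coeff i|) ≤ (p : ℤ) ^ k) :
    ‖Polynomial.aeval (Complex.exp (2 * Real.pi * Complex.I / p)) g‖ / (p : ℝ) ^ k
      ≥ 1 / (p : ℝ) ^ (k * (p - 1) / 2) := by
  classical
  have hp3 : 3 ≤ p := by
    rcases hp.two_le.lt_or_eq with h | h
    · omega
    · exfalso; rw [← h] at hodd; exact (Nat.not_odd_iff_even.mpr (by norm_num)) hodd
  set ω : ℂ := Complex.exp (2 * Real.pi * Complex.I / p) with hωdef
  have hprim : IsPrimitiveRoot ω p := Complex.isPrimitiveRoot_exp p hp.pos.ne'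
  have hωp : ω ^ p = 1 := hprim.pow_eq_one
  have hωint : IsIntegral ℚ ω :=
    ⟨X ^ p - 1, monic_X_pow_sub_C 1 hp.pos.ne', by simp [hωp]⟩
  haveI : FiniteDimensional ℚ ℚ⟮ω⟯ := IntermediateField.adjoin.finiteDimensional hωint
  set ωK : ℚ⟮ω⟯ := IntermediateField.AdjoinSimple.gen ℚ ω with hωK
  have hcoe : (ωK : ℂ) = ω := rfl
  have hωKp : ωK ^ p = 1 := by
    apply Subtype.coe_injective
    push_cast [hcoe, hωp]
    rfl
  have hfinrank : Module.finrank ℚ ℚ⟮ω⟯ = p - 1 := by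
    rw [IntermediateField.adjoin.finrank hωint,
      ← Polynomial.cyclotomic_eq_minpoly_rat hprim hp.pos,
      Polynomial.natDegree_cyclotomic, Nat.totient_prime hp]
  set x : ℚ⟮ω⟯ := Polynomial.aeval ωK g with hx
  set σ₀ : ℚ⟮ω⟯ →ₐ[ℚ] ℂ := ℚ⟮ω⟯.val with hσ₀
  have haevalσ : ∀ σ : ℚ⟮ω⟯ →ₐ[ℚ] ℂ, σ x = Polynomial.aeval (σ ωK) g := by
    intro σ
    exact (Polynomial.aeval_algHom_apply (σ.restrictScalars ℤ) ωK g).symm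
  have hσ₀x : σ₀ x = Polynomial.aeval ω g := by rw [haevalσ]; rfl
  have hx0 : x ≠ 0 := by
    intro h
    apply hg
    rw [← hσ₀x, h, map_zero]
  have hωKint : IsIntegral ℤ ωK :=
    ⟨X ^ p - 1, monic_X_pow_sub_C 1 hp.pos.ne', by simp [hωKp]⟩
  have hxint : IsIntegral ℤ x := by
    refine IsIntegral.of_mem_of_fg (Algebra.adjoin ℤ {ωK}) hωKint.fg_adjoin_singleton _ ?_
    rw [hx, Algebra.adjoin_singleton_eq_range_aeval]
    exact ⟨g, rfl⟩
  set N : ℚ := Algebra.norm ℚ x with hN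
  have hNint : IsIntegral ℤ N := Algebra.isIntegral_norm ℚ hxint
  obtain ⟨m, hm⟩ := IsIntegrallyClosed.isIntegral_iff.mp hNint
  have hN0 : N ≠ 0 := by
    rw [hN, Algebra.norm_ne_zero_iff]
    exact hx0
  have hm0 : m ≠ 0 := by rintro rfl; simp at hm; exact hN0 hm.symm
  have h1N : (1 : ℝ) ≤ ‖(algebraMap ℚ ℂ) N‖ := by
    rw [← hm]
    simp only [map_intCast, eq_intCast, Complex.norm_intCast]
    exact_mod_cast Int.one_le_abs hm0
  have hprod : ‖(algebraMap ℚ ℂ) N‖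
      = ∏ σ : ℚ⟮ω⟯ →ₐ[ℚ] ℂ, ‖σ x‖ := by
    rw [hN, Algebra.norm_eq_prod_embeddings, Complex.norm_prod]
  have hBpos : (0:ℝ) < (p:ℝ)^k := by positivity
  have hB1 : (1:ℝ) ≤ (p:ℝ)^k := by exact_mod_cast Nat.one_le_pow k p hp.pos
  -- bound each embedding value
  have hbound : ∀ σ : ℚ⟮ω⟯ →ₐ[ℚ] ℂ, ‖σ x‖ ≤ (p:ℝ)^k := by
    intro σ
    have hz : ‖σ ωK‖ = 1 := by
      have : (σ ωK) ^ p = 1 := by rw [← map_pow, hωKp, map_one]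
      exact Complex.norm_eq_one_of_pow_eq_one this hp.pos.ne'
    rw [haevalσ σ, Polynomial.aeval_def, Polynomial.eval₂_eq_sum, Polynomial.sum]
    calc ‖∑ i ∈ g.support, (algebraMap ℤ ℂ) (g.coeff i) * (σ ωK) ^ i‖
        ≤ ∑ i ∈ g.support, ‖(algebraMap ℤ ℂ) (g.coeff i) * (σ ωK) ^ i‖ :=
          norm_sum_le _ _
      _ = ∑ i ∈ g.support, |(g.coeff i : ℝ)| := by
          refine Finset.sum_congr rfl fun i _ => ?_
          rw [norm_mul, norm_pow, hz, one_pow, mul_one]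
          simp
      _ ≤ (p:ℝ)^k := by
          have : ((∑ i ∈ g.support, |g.coeff i| : ℤ) : ℝ) ≤ (((p:ℤ)^k : ℤ) : ℝ) := by
            exact_mod_cast h1
          push_cast at this
          exact this
  -- conjugate embedding
  set σ₁ : ℚ⟮ω⟯ →ₐ[ℚ] ℂ := ((Complex.conjAe.toAlgHom.restrictScalars ℚ).comp σ₀) with hσ₁
  have hσ₁x : ‖σ₁ x‖ = ‖σ₀ x‖ := by
    rw [hσ₁]
    show ‖(starRingEnd ℂ) (σ₀ x)‖ = ‖σ₀ x‖
    exact Complex.norm_conj _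
  have him : ω.im ≠ 0 := by
    have h2 : ω.im = Real.sin (2 * Real.pi / p) := by
      rw [hωdef, show 2 * Real.pi * Complex.I / (p:ℂ) = ((2 * Real.pi / p : ℝ) : ℂ) * Complex.I by
        push_cast; ring]
      exact Complex.exp_ofReal_mul_I_im _
    rw [h2]
    have hπ := Real.pi_pos
    have : (3:ℝ) ≤ p := by exact_mod_cast hp3
    refine ne_of_gt (Real.sin_pos_of_pos_of_lt_pi (by positivity) ?_)
    rw [div_lt_iff₀ (by linarith)]
    nlinarith
  have hne : σ₁ ≠ σ₀ := by
    intro h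
    have h2 := congrFun (congrArg DFunLike.coe h) ωK
    have h3 : (starRingEnd ℂ) ω = ω := h2
    rw [Complex.conj_eq_iff_im] at h3
    exact him h3
  -- split the product
  have hmem1 : σ₁ ∈ Finset.univ.erase σ₀ := Finset.mem_erase.mpr ⟨hne, Finset.mem_univ _⟩
  have hsplit := (Finset.mul_prod_erase Finset.univ (fun σ : ℚ⟮ω⟯ →ₐ[ℚ] ℂ => ‖σ x‖) (Finset.mem_univ σ₀)).symm
  have hsplit2 := (Finset.mul_prod_erase (Finset.univ.erase σ₀) (fun σ : ℚ⟮ω⟯ →ₐ[ℚ] ℂ => ‖σ x‖) hmem1).symm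
  rw [hsplit2] at hsplit
  have hcard : ((Finset.univ.erase σ₀).erase σ₁).card = p - 3 := by
    rw [Finset.card_erase_of_mem hmem1, Finset.card_erase_of_mem (Finset.mem_univ σ₀),
      Finset.card_univ, AlgHom.card, hfinrank]
    omega
  have hrest : ∏ σ ∈ (Finset.univ.erase σ₀).erase σ₁, ‖σ x‖
      ≤ ((p:ℝ)^k) ^ (p - 3) := by
    rw [← hcard, ← Finset.prod_const]
    exact Finset.prod_le_prod (fun σ _ => (norm_nonneg _)) (fun σ _ => hbound σ)
  set A : ℝ := ‖Polynomial.aeval ω g‖ with hA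
  have hA0 : 0 ≤ A := norm_nonneg _
  have key : 1 ≤ A * A * ((p:ℝ)^k) ^ (p - 3) := by
    have h4 : (1:ℝ) ≤ A * (A * ∏ σ ∈ (Finset.univ.erase σ₀).erase σ₁, ‖σ x‖) := by
      rw [← hσ₀x] at hA
      rw [hA] at *
      calc (1:ℝ) ≤ ‖(algebraMap ℚ ℂ) N‖ := h1N
        _ = _ := by rw [hprod, hsplit, hσ₁x]
    have h5 : ∏ σ ∈ (Finset.univ.erase σ₀).erase σ₁, ‖σ x‖ ≤ ((p:ℝ)^k)^(p-3) :=
      hrest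
    nlinarith [Finset.prod_nonneg (fun (σ : ℚ⟮ω⟯ →ₐ[ℚ] ℂ) (_ : σ ∈ (Finset.univ.erase σ₀).erase σ₁) => norm_nonneg (σ x))]
  -- final arithmetic
  have hP1 : (1:ℝ) ≤ (p:ℝ) := by exact_mod_cast hp.one_lt.le
  have hpow : ((p:ℝ)^k) ^ (p-3) = (p:ℝ) ^ (k * (p-3)) := by rw [← pow_mul]
  have he2 : (k * (p - 1) / 2) * 2 = k * (p - 1) := by
    obtain ⟨t, ht⟩ := hodd
    have h' : p - 1 = 2 * t := by omega
    rw [h', show k * (2*t) = (k*t)*2 by ring, Nat.mul_div_cancel _ (by norm_num)]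
  have hsum : k * (p - 1) = k * (p - 3) + 2 * k := by
    have : p - 1 = (p - 3) + 2 := by omega
    rw [this, Nat.mul_add]
    ring
  rw [ge_iff_le, ← pow_le_pow_iff_left₀ (by positivity) (by positivity) (two_ne_zero)]
  rw [div_pow, div_pow, one_pow, ← pow_mul, ← pow_mul, he2, hsum]
  rw [div_le_div_iff₀ (by positivity) (by positivity)]
  calc (1:ℝ) * (p:ℝ) ^ (k * 2) = (p:ℝ) ^ (k * 2) := by ring
    _ = 1 * (p:ℝ) ^ (k * 2) := by ring
    _ ≤ (A * A * (p:ℝ) ^ (k * (p - 3))) * (p:ℝ) ^ (k * 2) := by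
        refine mul_le_mul_of_nonneg_right ?_ (by positivity)
        rw [← hpow]; exact key
    _ = A ^ 2 * ((p:ℝ) ^ (k * (p - 3)) * (p:ℝ) ^ (k * 2)) := by ring
    _ = A ^ 2 * (p:ℝ) ^ (k * (p - 3) + 2 * k) := by rw [← pow_add]; ring_nf
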